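/- arXiv:1109.1658 — 10 statements merged into one kernel-verified Lean document; each statement's English description precedes it below -/
import Mathlib

section
/- Every simple closure space is a complete atomistic lattice whose atoms are exactly the singletons, and conversely every complete atomistic lattice L is isomorphic to the simple closure space {Σ[a] | a ∈ L} on its set of atoms Σ, where Σ[a] is the set of atoms below a. -/
open Set

/-- A simple closure space on `σ`: a family of subsets closed under arbitrary
intersections (the empty intersection giving `univ`), containing `∅` and all singletons. -/
def IsSCS {σ : Type*} (L : Set (Set σ)) : Prop :=
  (∀ ω ⊆ L, ⋂₀ ω ∈ L) ∧ (∅ : Set σ) ∈ L ∧ ∀ p : σ, {p} ∈ L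

/-- The join of a subset `A` of atoms/points in a simple closure space `L`. -/
def sJoin {σ : Type*} (L : Set (Set σ)) (A : Set σ) : Set σ := ⋂₀ {b ∈ L | A ⊆ b}

/-- `b` covers `a` in `L`. -/
def CoversIn {σ : Type*} (L : Set (Set σ)) (a b : Set σ) : Prop :=
  a ⊂ b ∧ ∀ c ∈ L, a ⊆ c → c ⊆ b → c = a ∨ c = b

/-- `x` is a coatom of `L`. -/
def IsCoatomOf {σ : Type*} (L : Set (Set σ)) (x : Set σ) : Prop :=
  x ∈ L ∧ x ≠ univ ∧ ∀ c ∈ L, x ⊆ c → c = x ∨ c = univ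

/-- `L` is coatomistic: every element is a meet of coatoms. -/
def Coatomistic {σ : Type*} (L : Set (Set σ)) : Prop :=
  ∀ a ∈ L, a = ⋂₀ {x | IsCoatomOf L x ∧ a ⊆ x}

/-- Covering property: for any atom `p` and `a ∈ L` with `p ∧ a = 0`,
`p ∨ a` covers `a`. -/
def HasCovProp {σ : Type*} (L : Set (Set σ)) : Prop :=
  ∀ p : σ, ∀ a ∈ L, p ∉ a → CoversIn L a (sJoin L (insert p a))

/-- Covering property of the dual lattice of `L`. -/
def HasDualCovProp {σ : Type*} (L : Set (Set σ)) : Prop :=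
  ∀ x, IsCoatomOf L x → ∀ a ∈ L, sJoin L (x ∪ a) = univ → CoversIn L (x ∩ a) a

/-- `f` is an orthocomplementation of `L`: an order-reversing involution with
`a ∨ f a = 1` for all `a ∈ L`. -/
def IsOrthoOn {σ : Type*} (L : Set (Set σ)) (f : Set σ → Set σ) : Prop :=
  (∀ a ∈ L, f a ∈ L) ∧ (∀ a ∈ L, f (f a) = a) ∧
  (∀ a ∈ L, ∀ b ∈ L, a ⊆ b → f b ⊆ f a) ∧
  (∀ a ∈ L, ∀ b ∈ L, a ∪ f a ⊆ b → b = univ)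

/-- The permutation `g` of the points induces an automorphism of `L`. -/
def IsAutoOn {σ : Type*} (L : Set (Set σ)) (g : Equiv.Perm σ) : Prop :=
  ∀ a, a ∈ L ↔ g '' a ∈ L

/-- `L` contains `MO₃`: three distinct atoms `p, q, r` such that `p ∨ q`
covers each of them. -/
def ContainsMO3 {σ : Type*} (L : Set (Set σ)) : Prop :=
  ∃ p q r : σ, p ≠ q ∧ p ≠ r ∧ q ≠ r ∧
    CoversIn L {p} (sJoin L {p, q}) ∧ CoversIn L {q} (sJoin L {p, q}) ∧
    CoversIn L {r} (sJoin L {p, q})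

/-- `L` contains `MO₄`: four distinct atoms `p, q, r, s` such that `p ∨ q`
covers each of them. -/
def ContainsMO4 {σ : Type*} (L : Set (Set σ)) : Prop :=
  ∃ p q r s : σ, p ≠ q ∧ p ≠ r ∧ p ≠ s ∧ q ≠ r ∧ q ≠ s ∧ r ≠ s ∧
    CoversIn L {p} (sJoin L {p, q}) ∧ CoversIn L {q} (sJoin L {p, q}) ∧
    CoversIn L {r} (sJoin L {p, q}) ∧ CoversIn L {s} (sJoin L {p, q})

/-- A connected covering of the point set of `L`. -/
def IsConnCover {σ : Type*} (L : Set (Set σ)) (𝒜 : Set (Set σ)) : Prop :=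
  ⋃₀ 𝒜 = Set.univ ∧
  (∀ A ∈ 𝒜, ∃ p q : σ, p ∈ A ∧ q ∈ A ∧ p ≠ q) ∧
  (∀ A ∈ 𝒜, ∀ p ∈ A, ∀ q ∈ A, p ≠ q → ∃ r, r ∈ sJoin L {p, q} ∧ r ≠ p ∧ r ≠ q) ∧
  (∀ p q : σ, ∃ n : ℕ, ∃ c : Fin (n + 1) → Set σ, (∀ i, c i ∈ 𝒜) ∧
    p ∈ c 0 ∧ q ∈ c (Fin.last n) ∧
    ∀ i : Fin n, ∃ x y : σ, x ≠ y ∧ (x ∈ c i.castSucc ∧ x ∈ c i.succ) ∧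
      (y ∈ c i.castSucc ∧ y ∈ c i.succ))

/-- `L` is weakly connected: `L ≠ 2` and there is a connected covering. -/
def WeaklyConnected {σ : Type*} (L : Set (Set σ)) : Prop :=
  (∃ p q : σ, p ≠ q) ∧ ∃ 𝒜, IsConnCover L 𝒜

/-- Restriction of `L` to the subset `e`, as a family of subsets of `↥e`. -/
def restrictCS {σ : Type*} (L : Set (Set σ)) (e : Set σ) : Set (Set e) :=
  {B | ∃ a ∈ L, a ⊆ e ∧ B = Subtype.val ⁻¹' a}

/-- Center of an orthocomplemented simple closure space: elements whose
orthocomplement is the set complement. -/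
def centerOf {σ : Type*} (L : Set (Set σ)) (f : Set σ → Set σ) : Set (Set σ) :=
  {a ∈ L | f a = aᶜ}

/-- Central cover of a point `p`. -/
def centralCover {σ : Type*} (L : Set (Set σ)) (f : Set σ → Set σ) (p : σ) : Set σ :=
  ⋂₀ {a ∈ centerOf L f | p ∈ a}

section Family

variable {Ω : Type*} {X : Ω → Type*}

/-- `⋃_α π_α⁻¹ (a α)`. -/
def cylUnion (a : ∀ α, Set (X α)) : Set (∀ α, X α) := {p | ∃ α, p α ∈ a α}

/-- `p[B, β]`: the point `p` with its `β`-th coordinate varying over `B`. -/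
def pSub (p : ∀ α, X α) (β : Ω) (B : Set (X β)) : Set (∀ α, X α) :=
  {q | q β ∈ B ∧ ∀ α, α ≠ β → q α = p α}

/-- The section `R_β[p]` of `R ⊆ ∏_α X α`. -/
def sect (R : Set (∀ α, X α)) (β : Ω) (p : ∀ α, X α) : Set (X β) :=
  {q | ∃ r ∈ R, r β = q ∧ ∀ α, α ≠ β → r α = p α}

/-- The box product `⊼_α L_α`: all nonempty intersections of the sets
`⋃_α π_α⁻¹ (a α)`. -/
def boxProd (L : ∀ α, Set (Set (X α))) : Set (Set (∀ α, X α)) :=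
  {A | ∃ ω ⊆ {B | ∃ a : ∀ α, Set (X α), (∀ α, a α ∈ L α) ∧ B = cylUnion a},
    ω.Nonempty ∧ A = ⋂₀ ω}

/-- The Fraser product `⊻_α L_α`: all `R` whose sections all lie in the factors. -/
def fraserProd (L : ∀ α, Set (Set (X α))) : Set (Set (∀ α, X α)) :=
  {R | ∀ β, ∀ p : ∀ α, X α, sect R β p ∈ L β}

/-- `M` is a weak tensor product of the family `L`: axioms P1–P3. -/
def IsWTP (L : ∀ α, Set (Set (X α))) (M : Set (Set (∀ α, X α))) : Prop :=
  IsSCS M ∧ (∀ a : ∀ α, Set (X α), (∀ α, a α ∈ L α) → cylUnion a ∈ M) ∧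
  (∀ p : ∀ α, X α, ∀ β, ∀ B : Set (X β), pSub p β B ∈ M → B ∈ L β)

/-- The closure operator `⋁_β R = ⋃_p p[⋁ R_β[p]]`. -/
def vJoin (L : ∀ α, Set (Set (X α))) (β : Ω) (R : Set (∀ α, X α)) : Set (∀ α, X α) :=
  ⋃ p : ∀ α, X α, pSub p β (sJoin (L β) (sect R β p))

/-- The orthocomplementation `#` induced on the box product by
orthocomplementations of the factors. -/
def sharp (f : ∀ α, Set (X α) → Set (X α)) (a : Set (∀ α, X α)) : Set (∀ α, X α) :=
  {p | ∀ q ∈ a, ∃ α, p α ∈ f α {q α}}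

end Family

section Binary

variable {X₁ X₂ : Type*}

/-- `a₁ × Σ₂ ∪ Σ₁ × a₂`. -/
def cylUnion₂ (a₁ : Set X₁) (a₂ : Set X₂) : Set (X₁ × X₂) := {p | p.1 ∈ a₁ ∨ p.2 ∈ a₂}

/-- Binary box product. -/
def boxProd₂ (L₁ : Set (Set X₁)) (L₂ : Set (Set X₂)) : Set (Set (X₁ × X₂)) :=
  {A | ∃ ω ⊆ {B | ∃ a₁ ∈ L₁, ∃ a₂ ∈ L₂, B = cylUnion₂ a₁ a₂}, ω.Nonempty ∧ A = ⋂₀ ω}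

/-- Binary Fraser product. -/
def fraserProd₂ (L₁ : Set (Set X₁)) (L₂ : Set (Set X₂)) : Set (Set (X₁ × X₂)) :=
  {R | (∀ p₁, {q | (p₁, q) ∈ R} ∈ L₂) ∧ (∀ p₂, {q | (q, p₂) ∈ R} ∈ L₁)}

/-- Binary weak tensor product: axioms P1–P3. -/
def IsWTP₂ (L₁ : Set (Set X₁)) (L₂ : Set (Set X₂)) (M : Set (Set (X₁ × X₂))) : Prop :=
  IsSCS M ∧ (∀ a₁ ∈ L₁, ∀ a₂ ∈ L₂, cylUnion₂ a₁ a₂ ∈ M) ∧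
  (∀ p₁ : X₁, ∀ A₂ : Set X₂, {p₁} ×ˢ A₂ ∈ M → A₂ ∈ L₂) ∧
  (∀ p₂ : X₂, ∀ A₁ : Set X₁, A₁ ×ˢ {p₂} ∈ M → A₁ ∈ L₁)

/-- The simple closure space `MO_Σ`, containing only `∅`, `Σ` and the singletons. -/
def MOspace (X : Type*) : Set (Set X) := {∅, univ} ∪ {A | ∃ p, A = {p}}

end Binary
theorem stmt_0' {σ : Type*} [Nonempty σ] (L : Set (Set σ)) (hL : IsSCS L)
    (α : Type*) [CompleteLattice α] [IsAtomistic α] :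
    ((∀ A ⊆ L, ⋂₀ A ∈ L ∧ (∀ a ∈ A, ⋂₀ A ⊆ a) ∧ ∀ b ∈ L, (∀ a ∈ A, b ⊆ a) → b ⊆ ⋂₀ A) ∧
     (∀ A ⊆ L, sJoin L (⋃₀ A) ∈ L ∧ (∀ a ∈ A, a ⊆ sJoin L (⋃₀ A)) ∧
        ∀ b ∈ L, (∀ a ∈ A, a ⊆ b) → sJoin L (⋃₀ A) ⊆ b) ∧
     (∀ a ∈ L, a = sJoin L (⋃₀ {b | (∃ p : σ, b = {p}) ∧ b ⊆ a})) ∧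
     (∀ a ∈ L, (∃ p : σ, a = {p}) ↔ a ≠ ∅ ∧ ∀ b ∈ L, b ⊆ a → b = ∅ ∨ b = a)) ∧
    (IsSCS {A : Set {x : α // IsAtom x} | ∃ c : α, A = {y : {x : α // IsAtom x} | (y : α) ≤ c}} ∧
     ∃ e : α ≃ ↥{A : Set {x : α // IsAtom x} | ∃ c : α, A = {y : {x : α // IsAtom x} | (y : α) ≤ c}},
       ∀ a b : α, a ≤ b ↔ (e a : Set {x : α // IsAtom x}) ⊆ (e b : Set {x : α // IsAtom x})) := by
  obtain ⟨hInt, hEmp, hSing⟩ := hL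
  have hJoinMem : ∀ S : Set σ, sJoin L S ∈ L := fun S => hInt _ (fun b hb => hb.1)
  have hJoinSub : ∀ S : Set σ, S ⊆ sJoin L S := by
    intro S x hx b hb
    exact hb.2 hx
  have hJoinLe : ∀ S : Set σ, ∀ b ∈ L, S ⊆ b → sJoin L S ⊆ b := by
    intro S b hb hSb x hx
    exact hx b ⟨hb, hSb⟩
  have hJoinSelf : ∀ a ∈ L, sJoin L a = a := fun a ha =>
    subset_antisymm (hJoinLe a a ha subset_rfl) (hJoinSub a)
  constructor
  · refine ⟨?_, ?_, ?_, ?_⟩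
    · intro A hA
      exact ⟨hInt A hA, fun a ha => sInter_subset_of_mem ha,
        fun b _ hb => subset_sInter hb⟩
    · intro A hA
      refine ⟨hJoinMem _, fun a ha => (subset_sUnion_of_mem ha).trans (hJoinSub _), ?_⟩
      intro b hb h
      exact hJoinLe _ b hb (sUnion_subset fun a ha => h a ha)
    · intro a ha
      have : ⋃₀ {b | (∃ p : σ, b = {p}) ∧ b ⊆ a} = a := by
        ext x
        constructor
        · rintro ⟨b, ⟨_, hba⟩, hxb⟩; exact hba hxb
        · intro hx; exact ⟨{x}, ⟨⟨x, rfl⟩, singleton_subset_iff.2 hx⟩, rfl⟩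
      rw [this, hJoinSelf a ha]
    · intro a ha
      constructor
      · rintro ⟨p, rfl⟩
        refine ⟨singleton_ne_empty p, fun b _ hb => ?_⟩
        rcases eq_empty_or_nonempty b with h | ⟨x, hx⟩
        · exact Or.inl h
        · have hxp : x = p := hb hx
          subst hxp
          exact Or.inr (subset_antisymm hb (singleton_subset_iff.2 hx))
      · rintro ⟨hne, hmin⟩
        obtain ⟨p, hp⟩ := nonempty_iff_ne_empty.2 hne
        rcases hmin {p} (hSing p) (singleton_subset_iff.2 hp) with h | h
        · exact absurd h (singleton_ne_empty p)
        · exact ⟨p, h.symm⟩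
  · set M := {A : Set {x : α // IsAtom x} | ∃ c : α, A = {y : {x : α // IsAtom x} | (y : α) ≤ c}}
      with hM
    have hSCS : IsSCS M := by
      refine ⟨?_, ⟨⊥, ?_⟩, fun p => ⟨(p : α), ?_⟩⟩
      · intro ω hω
        refine ⟨sInf {c : α | {y : {x : α // IsAtom x} | (y : α) ≤ c} ∈ ω}, ?_⟩
        ext y
        simp only [mem_sInter, mem_setOf_eq, le_sInf_iff]
        constructor
        · intro h c hc
          exact h _ hc
        · intro h B hB
          obtain ⟨c, rfl⟩ := hω hB
          exact h c hB
      · ext y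
        simp only [mem_setOf_eq, le_bot_iff]
        simpa using y.2.1
      · ext y
        simp only [mem_setOf_eq, mem_singleton_iff]
        constructor
        · rintro rfl; exact le_rfl
        · intro h
          rcases p.2.le_iff.1 h with h | h
          · exact absurd h y.2.1
          · exact Subtype.ext h
    refine ⟨hSCS, ?_⟩
    have hbij : Function.Bijective
        (fun a : α => (⟨{y : {x : α // IsAtom x} | (y : α) ≤ a}, ⟨a, rfl⟩⟩ : M)) := by
      constructor
      · intro a b hab
        have h := congrArg Subtype.val hab
        simp only at h
        refine le_iff_atom_le_imp.2 ?_ |>.antisymm (le_iff_atom_le_imp.2 ?_)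
        · intro c hc hca
          exact (Set.ext_iff.1 h ⟨c, hc⟩).1 hca
        · intro c hc hcb
          exact (Set.ext_iff.1 h ⟨c, hc⟩).2 hcb
      · rintro ⟨B, c, rfl⟩
        exact ⟨c, rfl⟩
    refine ⟨Equiv.ofBijective _ hbij, fun a b => ?_⟩
    constructor
    · intro hab y hy
      exact le_trans hy hab
    · intro h
      refine le_iff_atom_le_imp.2 fun c hc hca => h (show (⟨c, hc⟩ : {x : α // IsAtom x}) ∈ _ from hca)


/-- a simple closure space is a complete atomistic lattice whose atoms are
exactly the singletons (expressed concretely: sInfs and sSups exist in `L`, every element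
is the join of the singletons below it, and the atoms of `L` are exactly the singletons);
conversely, every complete atomistic lattice `α` is isomorphic to the simple closure space
`{Σ[a] | a ∈ α}` on its set of atoms. -/
theorem stmt_0 {σ : Type*} [Nonempty σ] (L : Set (Set σ)) (hL : IsSCS L)
    (α : Type*) [CompleteLattice α] [IsAtomistic α] :
    -- `L` is a complete lattice:
    ((∀ A ⊆ L, ⋂₀ A ∈ L ∧ (∀ a ∈ A, ⋂₀ A ⊆ a) ∧ ∀ b ∈ L, (∀ a ∈ A, b ⊆ a) → b ⊆ ⋂₀ A) ∧
     (∀ A ⊆ L, sJoin L (⋃₀ A) ∈ L ∧ (∀ a ∈ A, a ⊆ sJoin L (⋃₀ A)) ∧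
        ∀ b ∈ L, (∀ a ∈ A, a ⊆ b) → sJoin L (⋃₀ A) ⊆ b) ∧
     -- `L` is atomistic: every element is the join of the atoms (singletons) below it:
     (∀ a ∈ L, a = sJoin L (⋃₀ {b | (∃ p : σ, b = {p}) ∧ b ⊆ a})) ∧
     -- the atoms of `L` are exactly the singletons:
     (∀ a ∈ L, (∃ p : σ, a = {p}) ↔ a ≠ ∅ ∧ ∀ b ∈ L, b ⊆ a → b = ∅ ∨ b = a)) ∧
    -- conversely, `{Σ[a] | a ∈ α}` is a simple closure space on the atoms of `α`,
    -- and `α` is (order-)isomorphic to it: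
    (IsSCS {A : Set {x : α // IsAtom x} | ∃ c : α, A = {y : {x : α // IsAtom x} | (y : α) ≤ c}} ∧
     ∃ e : α ≃ ↥{A : Set {x : α // IsAtom x} | ∃ c : α, A = {y : {x : α // IsAtom x} | (y : α) ≤ c}},
       ∀ a b : α, a ≤ b ↔ (e a : Set {x : α // IsAtom x}) ⊆ (e b : Set {x : α // IsAtom x})) := by
  exact stmt_0' L hL α
end

section
/- If L is a weak tensor product of a family of simple closure spaces (L_α), then for every a in ∏_α L_α, the product set ∏_α a_α belongs to L. -/
open Set

/-- in a weak tensor product, every product set `∏_α a_α` with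
`a_α ∈ L_α` belongs to `L`. -/
theorem stmt_1 {Ω : Type*} {X : Ω → Type*} (L : ∀ α, Set (Set (X α)))
    (hL : ∀ α, IsSCS (L α)) (M : Set (Set (∀ α, X α))) (hM : IsWTP L M)
    (a : ∀ α, Set (X α)) (ha : ∀ α, a α ∈ L α) :
    {p : ∀ α, X α | ∀ α, p α ∈ a α} ∈ M := by
  classical
  set b : Ω → ∀ α, Set (X α) := fun β => Function.update (fun _ => ∅) β (a β) with hb
  have hcyl : ∀ β, cylUnion (b β) = {p : ∀ α, X α | p β ∈ a β} := by
    intro β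
    ext p
    constructor
    · rintro ⟨α, hα⟩
      by_cases h : α = β
      · subst h; simpa [hb, Function.update_self] using hα
      · simp [hb, Function.update_of_ne h] at hα
    · intro hp
      exact ⟨β, by simpa [hb, Function.update_self] using hp⟩
  have hmem : ∀ β, cylUnion (b β) ∈ M := by
    intro β
    apply hM.2.1
    intro α
    by_cases h : α = β
    · subst h; simpa [hb, Function.update_self] using ha α
    · simpa [hb, Function.update_of_ne h] using (hL α).2.1
  have key : {p : ∀ α, X α | ∀ α, p α ∈ a α} = ⋂₀ (Set.range fun β => cylUnion (b β)) := by
    ext p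
    simp only [mem_sInter, mem_range, forall_exists_index, mem_setOf_eq]
    constructor
    · rintro h S β rfl
      rw [hcyl]; exact h β
    · intro h β
      have := h _ β rfl
      rwa [hcyl] at this
  rw [key]
  exact hM.1.1 _ (by rintro S ⟨β, rfl⟩; exact hmem β)
end

section
/- If L is a weak tensor product of the L_α, then for every β ∈ Ω, b ∈ L_β, and p ∈ ∏_α Σ_α, the set p[b,β] (p with β-th coordinate varying over b) belongs to L. -/
open Set

/-- in a weak tensor product, `p[b, β] ∈ L` for every `b ∈ L_β`
and every point `p`. -/
theorem stmt_2 {Ω : Type*} {X : Ω → Type*} (L : ∀ α, Set (Set (X α)))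
    (hL : ∀ α, IsSCS (L α)) (M : Set (Set (∀ α, X α))) (hM : IsWTP L M)
    (β : Ω) (b : Set (X β)) (hb : b ∈ L β) (p : ∀ α, X α) :
    pSub p β b ∈ M := by
  classical
  obtain ⟨⟨hInt, _, _⟩, hP2, _⟩ := hM
  -- cylinder on one coordinate
  have cylM : ∀ (γ : Ω) (s : Set (X γ)), s ∈ L γ →
      {q : ∀ α, X α | q γ ∈ s} ∈ M := by
    intro γ s hs
    have h : cylUnion (Function.update (fun α => (∅ : Set (X α))) γ s) =
        {q : ∀ α, X α | q γ ∈ s} := by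
      ext q
      simp only [cylUnion, mem_setOf_eq]
      constructor
      · rintro ⟨α, hα⟩
        by_cases h : α = γ
        · subst h; simpa [Function.update_self] using hα
        · simp [Function.update_of_ne h] at hα
      · intro h; exact ⟨γ, by simpa [Function.update_self] using h⟩
    rw [← h]
    apply hP2
    intro α
    by_cases h : α = γ
    · subst h; simpa [Function.update_self] using hs
    · simpa [Function.update_of_ne h] using (hL α).2.1
  set ω : Set (Set (∀ α, X α)) :=
    insert {q : ∀ α, X α | q β ∈ b}
      {A | ∃ γ, γ ≠ β ∧ A = {q : ∀ α, X α | q γ = p γ}} with hω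
  have hsub : ω ⊆ M := by
    rintro A (rfl | ⟨γ, hγ, rfl⟩)
    · exact cylM β b hb
    · have := cylM γ {p γ} ((hL γ).2.2 (p γ))
      simpa using this
  have heq : pSub p β b = ⋂₀ ω := by
    ext q
    simp only [pSub, mem_setOf_eq, mem_sInter, hω]
    constructor
    · rintro ⟨h1, h2⟩ A hA
      rcases hA with rfl | ⟨γ, hγ, rfl⟩
      · exact h1
      · exact h2 γ hγ
    · intro h
      refine ⟨h _ (Or.inl rfl), fun γ hγ => h _ (Or.inr ⟨γ, hγ, rfl⟩)⟩
  rw [heq]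
  exact hInt ω hsub
end

section
/- Let L be a simple closure space on 𝚺 = ∏_α Σ_α satisfying axiom P2 of weak tensor products. If p, q ∈ 𝚺 differ in at least two coordinates, then the join p ∨ q in L equals the two-element set {p, q}. -/
open Set

/-- if `L` is a simple closure space on the product satisfying axiom P2
and `p, q` differ in at least two coordinates, then `p ∨ q = {p, q}`. -/
theorem stmt_3 {Ω : Type*} {X : Ω → Type*} (L : ∀ α, Set (Set (X α)))
    (hL : ∀ α, IsSCS (L α)) (M : Set (Set (∀ α, X α))) (hM : IsSCS M)
    (hP2 : ∀ a : ∀ α, Set (X α), (∀ α, a α ∈ L α) → cylUnion a ∈ M)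
    (p q : ∀ α, X α) (β γ : Ω) (hβγ : β ≠ γ) (h₁ : p β ≠ q β) (h₂ : p γ ≠ q γ) :
    sJoin M {p, q} = {p, q} := by
  classical
  apply Subset.antisymm
  · intro r hr
    by_contra hrpq
    simp only [mem_insert_iff, mem_singleton_iff, not_or] at hrpq
    obtain ⟨hrp, hrq⟩ := hrpq
    obtain ⟨δ, hδ⟩ : ∃ δ, r δ ≠ p δ := by
      by_contra h; push_neg at h; exact hrp (funext h)
    obtain ⟨ε, hε⟩ : ∃ ε, r ε ≠ q ε := by
      by_contra h; push_neg at h; exact hrq (funext h)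
    have key : ∀ δ' ε', δ' ≠ ε' → r δ' ≠ p δ' → r ε' ≠ q ε' → False := by
      intro δ' ε' hne hA hB
      set a : ∀ α, Set (X α) :=
        fun α => if α = δ' then {p α} else if α = ε' then {q α} else ∅ with ha
      have haL : ∀ α, a α ∈ L α := by
        intro α; simp only [ha]
        split_ifs
        exacts [(hL α).2.2 _, (hL α).2.2 _, (hL α).2.1]
      have hcyl : cylUnion a ∈ M := hP2 a haL
      have hpq : ({p, q} : Set (∀ α, X α)) ⊆ cylUnion a := by
        rintro x (rfl | rfl)
        · exact ⟨δ', by simp [ha]⟩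
        · exact ⟨ε', by simp [ha, hne.symm]⟩
      have hrmem : r ∈ cylUnion a := hr (cylUnion a) ⟨hcyl, hpq⟩
      obtain ⟨α, hα⟩ := hrmem
      simp only [ha] at hα
      split_ifs at hα with e1 e2
      · subst e1; exact hA hα
      · subst e2; exact hB hα
      · exact hα
    by_cases hδε : δ = ε
    · subst hδε
      -- r δ ≠ p δ and r δ ≠ q δ
      by_cases hδβ : δ = β
      · by_cases h : r γ = p γ
        · exact key δ γ (hδβ ▸ hβγ) hδ (fun e => h₂ (h.symm.trans e))
        · exact key γ δ (fun e => (hδβ ▸ hβγ) e.symm) h hε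
      · by_cases h : r β = p β
        · exact key δ β hδβ hδ (fun e => h₁ (h.symm.trans e))
        · exact key β δ (fun e => hδβ e.symm) h hε
    · exact key δ ε hδε hδ hε
  · intro x hx b hb
    exact hb.2 hx
end

section
/- The box product ⊼_α L_α, consisting of all nonempty intersections of sets of the form ⋃_α π_α^{-1}(a_α) with a ∈ ∏_α L_α, is the bottom element of the set S(L_α) of weak tensor products ordered by set-inclusion; i.e., it is a weak tensor product and it is contained in every weak tensor product. -/
open Set

section Aux

variable {Ω : Type*} {X : Ω → Type*}

lemma sect_eq [DecidableEq Ω] (R : Set (∀ α, X α)) (β : Ω) (p : ∀ α, X α) :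
    sect R β p = {q | Function.update p β q ∈ R} := by
  ext q
  constructor
  · rintro ⟨r, hr, hβ, hα⟩
    have : r = Function.update p β q := by
      funext α
      by_cases h : α = β
      · subst h; simpa using hβ
      · simp [Function.update_of_ne h, hα α h]
    exact mem_setOf.2 (this ▸ hr)
  · intro h
    exact ⟨Function.update p β q, h, Function.update_self _ _ _,
      fun α hα => Function.update_of_ne hα _ _⟩

lemma univ_mem_of_SCS {σ : Type*} {L : Set (Set σ)} (h : IsSCS L) : univ ∈ L := by
  simpa using h.1 ∅ (empty_subset _)

lemma sect_cylUnion_mem [DecidableEq Ω] (L : ∀ α, Set (Set (X α))) (hL : ∀ α, IsSCS (L α))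
    (a : ∀ α, Set (X α)) (ha : ∀ α, a α ∈ L α) (β : Ω) (p : ∀ α, X α) :
    sect (cylUnion a) β p ∈ L β := by
  rw [sect_eq]
  by_cases h : ∃ α, α ≠ β ∧ p α ∈ a α
  · obtain ⟨α, hαβ, hpα⟩ := h
    have : {q | Function.update p β q ∈ cylUnion a} = univ := by
      ext q; simp only [mem_setOf_eq, mem_univ, iff_true]
      exact ⟨α, by rwa [Function.update_of_ne hαβ]⟩
    rw [this]; exact univ_mem_of_SCS (hL β)
  · push_neg at h
    have : {q | Function.update p β q ∈ cylUnion a} = a β := by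
      ext q
      simp only [mem_setOf_eq, cylUnion]
      constructor
      · rintro ⟨α, hα⟩
        by_cases hαβ : α = β
        · subst hαβ; simpa using hα
        · exact absurd (by rwa [Function.update_of_ne hαβ] at hα) (h α hαβ)
      · intro hq; exact ⟨β, by simpa using hq⟩
    rw [this]; exact ha β

end Aux

/-- the box product `⊼_α L_α` is the bottom element of the set of weak
tensor products: it is a weak tensor product and is contained in every weak tensor product. -/
theorem stmt_4 {Ω : Type*} [Nonempty Ω] {X : Ω → Type*} [∀ α, Nonempty (X α)]
    (L : ∀ α, Set (Set (X α))) (hL : ∀ α, IsSCS (L α)) :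
    IsWTP L (boxProd L) ∧ ∀ M, IsWTP L M → boxProd L ⊆ M := by
  classical
  set gens : Set (Set (∀ α, X α)) :=
    {B | ∃ a : ∀ α, Set (X α), (∀ α, a α ∈ L α) ∧ B = cylUnion a} with hgens
  have hP2 : ∀ a : ∀ α, Set (X α), (∀ α, a α ∈ L α) → cylUnion a ∈ boxProd L := by
    intro a ha
    exact ⟨{cylUnion a}, by rintro B rfl; exact ⟨a, ha, rfl⟩,
      singleton_nonempty _, (sInter_singleton _).symm⟩
  have huniv : (univ : Set (∀ α, X α)) ∈ boxProd L := by
    have : cylUnion (fun α => (univ : Set (X α))) = univ := by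
      ext p; simp only [cylUnion, mem_setOf_eq, mem_univ, iff_true]
      obtain ⟨α⟩ := ‹Nonempty Ω›; exact ⟨α, trivial⟩
    rw [← this]
    exact hP2 _ fun α => univ_mem_of_SCS (hL α)
  constructor
  · refine ⟨⟨?_, ?_, ?_⟩, hP2, ?_⟩
    · -- closed under sInter
      intro ω' hω'
      rcases eq_empty_or_nonempty ω' with rfl | ⟨A₀, hA₀⟩
      · rw [sInter_empty]; exact huniv
      · have hch : ∀ A ∈ ω', ∃ ω, ω ⊆ gens ∧ ω.Nonempty ∧ A = ⋂₀ ω := by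
          intro A hA
          obtain ⟨ω, h1, h2, h3⟩ := hω' hA
          exact ⟨ω, h1, h2, h3⟩
        choose F hF1 hF2 hF3 using hch
        refine ⟨⋃ A ∈ ω', ⋃ (hA : A ∈ ω'), F A hA, ?_, ?_, ?_⟩
        · refine iUnion₂_subset fun A hA => iUnion_subset fun hA' => hF1 A hA'
        · obtain ⟨B, hB⟩ := hF2 A₀ hA₀
          exact ⟨B, mem_iUnion₂.2 ⟨A₀, hA₀, mem_iUnion.2 ⟨hA₀, hB⟩⟩⟩
        · apply Subset.antisymm
          · intro x hx
            refine mem_sInter.2 fun B hB => ?_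
            obtain ⟨A, hA, hB'⟩ := mem_iUnion₂.1 hB
            obtain ⟨hA', hB''⟩ := mem_iUnion.1 hB'
            have := mem_sInter.1 hx A hA
            rw [hF3 A hA'] at this
            exact mem_sInter.1 this B hB''
          · intro x hx
            refine mem_sInter.2 fun A hA => ?_
            rw [hF3 A hA]
            refine mem_sInter.2 fun B hB => ?_
            exact mem_sInter.1 hx B (mem_iUnion₂.2 ⟨A, hA, mem_iUnion.2 ⟨hA, hB⟩⟩)
    · -- empty set
      have : cylUnion (fun α => (∅ : Set (X α))) = (∅ : Set (∀ α, X α)) := by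
        ext p; simp [cylUnion]
      rw [← this]
      exact hP2 _ fun α => (hL α).2.1
    · -- singletons
      intro p
      refine ⟨{B | ∃ β, B = cylUnion (fun α => {x | α = β ∧ x = p α})}, ?_, ?_, ?_⟩
      · rintro B ⟨β, rfl⟩
        refine ⟨_, fun α => ?_, rfl⟩
        by_cases h : α = β
        · subst h
          have : {x | α = α ∧ x = p α} = ({p α} : Set (X α)) := by ext x; simp
          rw [this]; exact (hL α).2.2 _
        · have : {x | α = β ∧ x = p α} = (∅ : Set (X α)) := by
            ext x; simp [h]
          rw [this]; exact (hL α).2.1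
      · obtain ⟨β⟩ := ‹Nonempty Ω›; exact ⟨_, β, rfl⟩
      · ext q
        simp only [mem_singleton_iff, mem_sInter, mem_setOf_eq]
        constructor
        · rintro rfl B ⟨β, rfl⟩
          exact ⟨β, rfl, rfl⟩
        · intro h
          funext β
          obtain ⟨α, rfl, h2⟩ := h _ ⟨β, rfl⟩
          exact h2
    · -- P3
      intro p β B hB
      obtain ⟨ω, hω1, hω2, hω3⟩ := hB
      have hBeq : B = sect (pSub p β B) β p := by
        rw [sect_eq]
        ext q
        simp only [mem_setOf_eq, pSub, Function.update_self]
        constructor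
        · intro hq
          exact ⟨hq, fun α hα => Function.update_of_ne hα _ _⟩
        · exact fun h => h.1
      rw [hBeq, hω3, sect_eq]
      have : {q | Function.update p β q ∈ ⋂₀ ω} =
          ⋂₀ {s | ∃ A ∈ ω, s = {q | Function.update p β q ∈ A}} := by
        ext q
        simp only [mem_setOf_eq, mem_sInter]
        constructor
        · rintro hq s ⟨A, hA, rfl⟩; exact hq A hA
        · intro hq A hA; exact hq _ ⟨A, hA, rfl⟩
      rw [this]
      refine (hL β).1 _ ?_
      rintro s ⟨A, hA, rfl⟩
      obtain ⟨a, ha, rfl⟩ := hω1 hA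
      have := sect_cylUnion_mem L hL a ha β p
      rwa [sect_eq] at this
  · -- minimality
    intro M hM A hA
    obtain ⟨ω, hω1, _, rfl⟩ := hA
    refine hM.1.1 ω fun B hB => ?_
    obtain ⟨a, ha, rfl⟩ := hω1 hB
    exact hM.2.1 a ha
end

section
/- The set ⊻_α L_α = {R ⊆ ∏_α Σ_α | for all p and all β, the section R_β[p] = {q ∈ Σ_β | p[q,β] ∈ R} belongs to L_β} is the top element of the set of weak tensor products of the L_α; i.e., it is a weak tensor product and contains every weak tensor product. -/
open Set

/-- the Fraser product `⊻_α L_α` is the top element of the set of weak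
tensor products: it is a weak tensor product and contains every weak tensor product. -/
theorem stmt_5 {Ω : Type*} [Nonempty Ω] {X : Ω → Type*} [∀ α, Nonempty (X α)]
    (L : ∀ α, Set (Set (X α))) (hL : ∀ α, IsSCS (L α)) :
    IsWTP L (fraserProd L) ∧ ∀ M, IsWTP L M → M ⊆ fraserProd L := by
  classical
  have huniv : ∀ β, (univ : Set (X β)) ∈ L β := by
    intro β
    have := (hL β).1 ∅ (by simp)
    simpa using this
  -- sections via `Function.update`
  have hsect : ∀ (R : Set (∀ α, X α)) (β : Ω) (p : ∀ α, X α),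
      sect R β p = {q | Function.update p β q ∈ R} := by
    intro R β p
    ext q
    constructor
    · rintro ⟨r, hr, rfl, hoff⟩
      have : Function.update p β (r β) = r := by
        funext α
        by_cases h : α = β
        · subst h; simp
        · simp [Function.update_of_ne h, hoff α h]
      simpa [Set.mem_setOf_eq, this] using hr
    · intro h
      exact ⟨Function.update p β q, h, by simp,
        fun α hα => Function.update_of_ne hα _ _⟩
  constructor
  · refine ⟨⟨?_, ?_, ?_⟩, ?_, ?_⟩
    · -- closed under arbitrary intersections
      intro ω hω β p
      have : sect (⋂₀ ω) β p = ⋂₀ ((fun a => sect a β p) '' ω) := by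
        ext q
        simp [hsect, Set.mem_sInter]
      rw [this]
      refine (hL β).1 _ ?_
      rintro _ ⟨a, ha, rfl⟩
      exact hω ha β p
    · -- empty set
      intro β p
      have : sect (∅ : Set (∀ α, X α)) β p = ∅ := by
        ext q; simp [hsect]
      rw [this]; exact (hL β).2.1
    · -- singletons
      intro p₀ β p
      by_cases h : ∀ α, α ≠ β → p α = p₀ α
      · have : sect ({p₀} : Set (∀ α, X α)) β p = {p₀ β} := by
          ext q
          simp only [hsect, Set.mem_setOf_eq, Set.mem_singleton_iff]
          constructor
          · intro hq
            have := congrFun hq β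
            simpa using this
          · intro hq
            funext α
            by_cases hα : α = β
            · subst hα; simpa using hq
            · simp [Function.update_of_ne hα, h α hα]
        rw [this]; exact (hL β).2.2 _
      · have : sect ({p₀} : Set (∀ α, X α)) β p = ∅ := by
          ext q
          simp only [hsect, Set.mem_setOf_eq, Set.mem_singleton_iff,
            Set.mem_empty_iff_false, iff_false]
          intro hq
          apply h
          intro α hα
          have := congrFun hq α
          simpa [Function.update_of_ne hα] using this
        rw [this]; exact (hL β).2.1
    · -- P2
      intro a ha β p
      by_cases h : ∃ α, α ≠ β ∧ p α ∈ a α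
      · have : sect (cylUnion a) β p = univ := by
          ext q
          simp only [hsect, Set.mem_setOf_eq, Set.mem_univ, iff_true, cylUnion]
          obtain ⟨α, hα, hp⟩ := h
          exact ⟨α, by simpa [Function.update_of_ne hα] using hp⟩
        rw [this]; exact huniv β
      · have : sect (cylUnion a) β p = a β := by
          ext q
          simp only [hsect, Set.mem_setOf_eq, cylUnion]
          constructor
          · rintro ⟨α, hα⟩
            by_cases hαβ : α = β
            · subst hαβ; simpa using hα
            · exact absurd ⟨α, hαβ, by simpa [Function.update_of_ne hαβ] using hα⟩ h
          · intro hq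
            exact ⟨β, by simpa using hq⟩
        rw [this]; exact ha β
    · -- P3
      intro p β B hB
      have := hB β p
      have hEq : sect (pSub p β B) β p = B := by
        ext q
        simp only [hsect, Set.mem_setOf_eq, pSub]
        constructor
        · rintro ⟨h1, _⟩
          simpa using h1
        · intro hq
          exact ⟨by simpa using hq, fun α hα => Function.update_of_ne hα _ _⟩
      rwa [hEq] at this
  · -- maximality
    rintro M ⟨hSCS, hP2, hP3⟩ R hR β p
    apply hP3 p β
    -- the cylinder `pSub p β univ` is in `M`
    set a : Ω → ∀ α, Set (X α) := fun γ α => {x : X α | α = γ ∧ HEq x (p γ)} with ha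
    have haL : ∀ γ α, a γ α ∈ L α := by
      intro γ α
      by_cases h : α = γ
      · subst h
        have : a α α = {p α} := by
          ext x; simp [ha]
        rw [this]; exact (hL α).2.2 _
      · have : a γ α = ∅ := by
          ext x; simp [ha, h]
        rw [this]; exact (hL α).2.1
    have hcyl : ∀ γ, cylUnion (a γ) = {q : ∀ α, X α | q γ = p γ} := by
      intro γ
      ext q
      simp only [cylUnion, Set.mem_setOf_eq, ha]
      constructor
      · rintro ⟨α, rfl, hh⟩
        exact eq_of_heq hh
      · intro hq
        exact ⟨γ, rfl, heq_of_eq hq⟩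
    have hcylM : pSub p β (univ : Set (X β)) ∈ M := by
      have : pSub p β (univ : Set (X β)) = ⋂₀ ((fun γ => cylUnion (a γ)) '' {γ | γ ≠ β}) := by
        ext q
        simp only [pSub, Set.mem_setOf_eq, Set.mem_univ, true_and, Set.mem_sInter,
          Set.mem_image]
        constructor
        · rintro h _ ⟨γ, hγ, rfl⟩
          rw [hcyl]; exact h γ hγ
        · intro h α hα
          have := h (cylUnion (a α)) ⟨α, hα, rfl⟩
          rwa [hcyl] at this
      rw [this]
      refine hSCS.1 _ ?_
      rintro _ ⟨γ, _, rfl⟩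
      exact hP2 (a γ) (haL γ)
    have hkey : pSub p β (sect R β p) = R ∩ pSub p β (univ : Set (X β)) := by
      ext q
      simp only [pSub, Set.mem_setOf_eq, Set.mem_inter_iff, Set.mem_univ, true_and]
      constructor
      · rintro ⟨⟨r, hr, hrβ, hroff⟩, hoff⟩
        have : r = q := by
          funext α
          by_cases hα : α = β
          · subst hα; exact hrβ
          · rw [hroff α hα, hoff α hα]
        exact ⟨this ▸ hr, hoff⟩
      · rintro ⟨hq, hoff⟩
        exact ⟨⟨q, hq, rfl, hoff⟩, hoff⟩
    rw [hkey]
    have : R ∩ pSub p β (univ : Set (X β)) = ⋂₀ {R, pSub p β (univ : Set (X β))} := by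
      simp
    rw [this]
    refine hSCS.1 _ ?_
    rintro A hA
    rcases hA with rfl | rfl
    · exact hR
    · exact hcylM
end

section
/- The operator ⋁_β on subsets of 𝚺 = ∏_α Σ_α, defined by ⋁_β R = ⋃_{p∈𝚺} p[⋁_{L_β} R_β[p]], is a closure operator: R ⊆ ⋁_β R, ⋁_β(⋁_β R) = ⋁_β R, and R ⊆ S implies ⋁_β R ⊆ ⋁_β S. -/
open Set

lemma subset_sJoin' {σ : Type*} (L : Set (Set σ)) (A : Set σ) : A ⊆ sJoin L A := by
  intro x hx b hb
  exact hb.2 hx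

lemma sJoin_mono' {σ : Type*} (L : Set (Set σ)) {A B : Set σ} (h : A ⊆ B) :
    sJoin L A ⊆ sJoin L B := by
  intro x hx b hb
  exact hx b ⟨hb.1, h.trans hb.2⟩

lemma sJoin_mem' {σ : Type*} {L : Set (Set σ)} (hL : IsSCS L) (A : Set σ) :
    sJoin L A ∈ L :=
  hL.1 _ (fun b hb => hb.1)

lemma sJoin_le' {σ : Type*} (L : Set (Set σ)) {A b : Set σ} (hb : b ∈ L) (h : A ⊆ b) :
    sJoin L A ⊆ b := fun x hx => hx b ⟨hb, h⟩

lemma sJoin_idem' {σ : Type*} {L : Set (Set σ)} (hL : IsSCS L) (A : Set σ) :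
    sJoin L (sJoin L A) = sJoin L A := by
  apply Set.Subset.antisymm
  · exact sJoin_le' L (sJoin_mem' hL A) (subset_refl _)
  · exact subset_sJoin' L _

lemma sect_congr' {Ω : Type*} {X : Ω → Type*} (R : Set (∀ α, X α)) (β : Ω)
    {p p' : ∀ α, X α} (h : ∀ α, α ≠ β → p α = p' α) :
    sect R β p = sect R β p' := by
  ext q
  constructor <;> rintro ⟨r, hr, hrβ, hrα⟩
  · exact ⟨r, hr, hrβ, fun α hα => (hrα α hα).trans (h α hα)⟩
  · exact ⟨r, hr, hrβ, fun α hα => (hrα α hα).trans (h α hα).symm⟩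

/-- the operator `⋁_β` is a closure operator on subsets of `∏_α X α`:
extensive, idempotent and monotone. -/
theorem stmt_7 {Ω : Type*} {X : Ω → Type*} (L : ∀ α, Set (Set (X α)))
    (hL : ∀ α, IsSCS (L α)) (β : Ω) (R S : Set (∀ α, X α)) (hRS : R ⊆ S) :
    R ⊆ vJoin L β R ∧ vJoin L β (vJoin L β R) = vJoin L β R ∧
      vJoin L β R ⊆ vJoin L β S := by
  have hext : ∀ T : Set (∀ α, X α), T ⊆ vJoin L β T := by
    intro T r hr
    refine Set.mem_iUnion.2 ⟨r, ?_, fun α _ => rfl⟩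
    exact subset_sJoin' (L β) _ ⟨r, hr, rfl, fun α _ => rfl⟩
  have hmono : ∀ T T' : Set (∀ α, X α), T ⊆ T' → vJoin L β T ⊆ vJoin L β T' := by
    intro T T' hTT' q hq
    obtain ⟨p, hpβ, hpα⟩ := Set.mem_iUnion.1 hq
    refine Set.mem_iUnion.2 ⟨p, ?_, hpα⟩
    refine sJoin_mono' (L β) ?_ hpβ
    rintro x ⟨r, hr, hrβ, hrα⟩
    exact ⟨r, hTT' hr, hrβ, hrα⟩
  refine ⟨hext R, ?_, hmono R S hRS⟩
  apply Set.Subset.antisymm _ (hext _)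
  intro q hq
  obtain ⟨p, hpβ, hpα⟩ := Set.mem_iUnion.1 hq
  have key : sect (vJoin L β R) β p ⊆ sJoin (L β) (sect R β p) := by
    rintro x ⟨r, hr, hrβ, hrα⟩
    obtain ⟨p', hp'β, hp'α⟩ := Set.mem_iUnion.1 hr
    have : sect R β p' = sect R β p :=
      sect_congr' R β (fun α hα => ((hp'α α hα).symm.trans (hrα α hα)))
    rw [this] at hp'β
    rw [← hrβ]; exact hp'β
  have : sJoin (L β) (sect (vJoin L β R) β p) ⊆ sJoin (L β) (sect R β p) := by
    have := sJoin_mono' (L β) key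
    rwa [sJoin_idem' (hL β)] at this
  exact Set.mem_iUnion.2 ⟨p, this hpβ, hpα⟩
end

section
/- If there is at most one index β such that L_β is not the full power set of Σ_β, then the box product ⊼_α L_α equals the Fraser tensor product ⊻_α L_α, and both equal {R ⊆ ∏_α Σ_α | R_β[p] ∈ L_β for all p}. -/
open Set

lemma univ_mem_scs {σ : Type*} {L : Set (Set σ)} (hL : IsSCS L) : (univ : Set σ) ∈ L := by
  have := hL.1 ∅ (by simp)
  simpa using this

open Classical in
lemma sect_eq_update {Ω : Type*} {X : Ω → Type*} [DecidableEq Ω]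
    (B : Set (∀ α, X α)) (β : Ω) (p : ∀ α, X α) :
    sect B β p = {q | Function.update p β q ∈ B} := by
  ext q
  constructor
  · rintro ⟨r, hr, rfl, h⟩
    have hr' : Function.update p β (r β) = r := by
      funext α
      by_cases hα : α = β
      · subst hα; simp
      · rw [Function.update_of_ne hα]; exact (h α hα).symm
    show Function.update p β (r β) ∈ B
    rwa [hr']
  · intro h
    exact ⟨Function.update p β q, h, Function.update_self _ _ _,
      fun α hα => Function.update_of_ne hα _ _⟩

/-- if at most one factor `L_β` is not the full power set, then the box
product equals the Fraser product, and both equal `{R | R_β[p] ∈ L_β for all p}`. -/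
theorem stmt_8 {Ω : Type*} [Nonempty Ω] {X : Ω → Type*} [∀ α, Nonempty (X α)]
    (L : ∀ α, Set (Set (X α))) (hL : ∀ α, IsSCS (L α))
    (β : Ω) (hβ : ∀ γ, γ ≠ β → L γ = Set.univ) :
    boxProd L = fraserProd L ∧
      fraserProd L = {R | ∀ p : ∀ α, X α, sect R β p ∈ L β} := by
  classical
  set S : Set (Set (∀ α, X α)) := {R | ∀ p : ∀ α, X α, sect R β p ∈ L β} with hS
  have h2 : fraserProd L = S := by
    ext R
    constructor
    · intro hR p; exact hR β p
    · intro hR γ p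
      by_cases h : γ = β
      · subst h; exact hR p
      · rw [hβ γ h]; trivial
  have hbox_sub : boxProd L ⊆ S := by
    rintro A ⟨ω, hω, hne, rfl⟩ p
    have hsect : sect (⋂₀ ω) β p = ⋂₀ ((fun B => sect B β p) '' ω) := by
      rw [sect_eq_update]
      ext q
      simp only [mem_sInter, mem_image, mem_setOf_eq]
      constructor
      · rintro h _ ⟨B, hB, rfl⟩
        rw [sect_eq_update]; exact h B hB
      · intro h B hB
        have := h _ ⟨B, hB, rfl⟩
        rwa [sect_eq_update] at this
    rw [hsect]
    apply (hL β).1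
    rintro _ ⟨B, hB, rfl⟩
    obtain ⟨a, ha, rfl⟩ := hω hB
    by_cases hc : ∃ γ, γ ≠ β ∧ p γ ∈ a γ
    · obtain ⟨γ, hγ, hpγ⟩ := hc
      have : sect (cylUnion a) β p = univ := by
        rw [sect_eq_update]
        ext q
        simp only [mem_setOf_eq, mem_univ, iff_true]
        exact ⟨γ, by rwa [Function.update_of_ne hγ]⟩
      show sect (cylUnion a) β p ∈ L β
      rw [this]; exact univ_mem_scs (hL β)
    · push_neg at hc
      have : sect (cylUnion a) β p = a β := by
        rw [sect_eq_update]
        ext q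
        simp only [mem_setOf_eq]
        constructor
        · rintro ⟨γ, hγ⟩
          by_cases h : γ = β
          · subst h; rwa [Function.update_self] at hγ
          · rw [Function.update_of_ne h] at hγ; exact absurd hγ (hc γ h)
        · intro h; exact ⟨β, by rwa [Function.update_self]⟩
      show sect (cylUnion a) β p ∈ L β
      rw [this]; exact ha β
  have hS_sub : S ⊆ boxProd L := by
    intro R hR
    set a : (∀ α, X α) → ∀ α, Set (X α) :=
      fun p => Function.update (fun γ => ({p γ}ᶜ : Set (X γ))) β (sect R β p) with ha
    refine ⟨insert (cylUnion (fun α => (univ : Set (X α))))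
      {B | ∃ p, p ∉ R ∧ B = cylUnion (a p)}, ?_, ⟨_, mem_insert _ _⟩, ?_⟩
    · rintro B hB
      rcases hB with rfl | ⟨p, hp, rfl⟩
      · exact ⟨fun α => univ, fun α => univ_mem_scs (hL α), rfl⟩
      · refine ⟨a p, fun α => ?_, rfl⟩
        by_cases h : α = β
        · subst h; simpa [ha, Function.update_self] using hR p
        · simp only [ha, Function.update_of_ne h]; rw [hβ α h]; trivial
    · ext r
      simp only [mem_sInter, mem_insert_iff, mem_setOf_eq]
      rw [Iff.comm]
      constructor
      · intro h
        by_contra hr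
        have hmem := h (cylUnion (a r)) (Or.inr ⟨r, hr, rfl⟩)
        obtain ⟨γ, hγ⟩ := hmem
        by_cases hgb : γ = β
        · rw [hgb] at hγ
          simp only [ha, Function.update_self] at hγ
          obtain ⟨s, hs, hsγ, hsoff⟩ := hγ
          have hsr : s = r := funext fun α =>
            if hα : α = β then by subst hα; exact hsγ else hsoff α hα
          exact hr (hsr ▸ hs)
        · simp only [ha, Function.update_of_ne hgb] at hγ
          exact hγ rfl
      · intro hrR B hB
        rcases hB with rfl | ⟨p, hp, rfl⟩
        · obtain ⟨α⟩ := ‹Nonempty Ω›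
          exact ⟨α, trivial⟩
        · by_cases h : ∀ γ, γ ≠ β → r γ = p γ
          · refine ⟨β, ?_⟩
            simp only [ha, Function.update_self]
            exact ⟨r, hrR, rfl, h⟩
          · push_neg at h
            obtain ⟨γ, hγ, hne⟩ := h
            exact ⟨γ, by simp only [ha, Function.update_of_ne hγ]; exact hne⟩
  exact ⟨by rw [h2]; exact Subset.antisymm hbox_sub hS_sub, h2⟩
end

section
/- Let L be a weak tensor product of a finite family L₁,…,L_n of simple closure spaces, and let x₁,…,x_n be coatoms of L₁,…,L_n respectively. Then X = ⋃_{i=1}^n π_i^{-1}(x_i) is a coatom of L. -/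
open Set

/-- in a weak tensor product of a finite family, if each `x_i` is a coatom
of `L_i`, then `⋃_i π_i⁻¹ (x_i)` is a coatom of `L`. -/
theorem stmt_11 {n : ℕ} {X : Fin n → Type*} [∀ i, Nonempty (X i)]
    (L : ∀ i, Set (Set (X i))) (hL : ∀ i, IsSCS (L i))
    (M : Set (Set (∀ i, X i))) (hM : IsWTP L M)
    (x : ∀ i, Set (X i)) (hx : ∀ i, IsCoatomOf (L i) (x i)) :
    IsCoatomOf M (cylUnion x) := by
  obtain ⟨hMscs, hP2, hP3⟩ := hM
  have hmem : cylUnion x ∈ M := hP2 x (fun i => (hx i).1)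
  have hne : ∀ i, ∃ t, t ∉ x i := fun i =>
    (ne_univ_iff_exists_notMem (x i)).mp (hx i).2.1
  -- key lemma: points of `c` outside `x` can be freely updated along any coordinate
  have key : ∀ c ∈ M, cylUnion x ⊆ c → ∀ p, p ∈ c → ∀ β, p β ∉ x β →
      ∀ t, Function.update p β t ∈ c := by
    intro c hc hsub p hpc β hpβ t
    set B : Set (X β) := {t | Function.update p β t ∈ c} with hBdef
    set T : Set (∀ i, X i) := {q | ∀ α, α ≠ β → q α = p α} with hTdef
    have hcyl : ∀ α : Fin n,
        cylUnion (Function.update (fun γ => (∅ : Set (X γ))) α {p α}) =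
          {q : ∀ i, X i | q α = p α} := by
      intro α
      ext q
      constructor
      · rintro ⟨γ, hγ⟩
        by_cases h : γ = α
        · subst h; simpa using hγ
        · rw [Function.update_of_ne h] at hγ; exact absurd hγ (notMem_empty _)
      · intro h
        exact ⟨α, by simpa using h⟩
    have hT : T ∈ M := by
      have hTeq : T = ⋂₀ ((fun α : Fin n =>
          cylUnion (Function.update (fun γ => (∅ : Set (X γ))) α {p α})) '' {α | α ≠ β}) := by
        ext q
        simp only [hTdef, sInter_image, mem_iInter, mem_setOf_eq]
        constructor
        · intro h α hα
          rw [hcyl α]; exact h α hα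
        · intro h α hα
          have := h α hα
          rwa [hcyl α] at this
      rw [hTeq]
      apply hMscs.1
      rintro A ⟨α, hα, rfl⟩
      apply hP2
      intro γ
      by_cases h : γ = α
      · subst h; simpa using (hL γ).2.2 (p γ)
      · rw [Function.update_of_ne h]; exact (hL γ).2.1
    have hcT : c ∩ T ∈ M := by
      have := hMscs.1 {c, T} (by
        rintro A hA
        rcases hA with rfl | rfl
        · exact hc
        · exact hT)
      rwa [sInter_pair] at this
    have hupd : ∀ q : ∀ i, X i, (∀ α, α ≠ β → q α = p α) →
        Function.update p β (q β) = q := by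
      intro q hq
      funext α
      by_cases h : α = β
      · subst h; simp
      · rw [Function.update_of_ne h]; exact (hq α h).symm
    have hps : pSub p β B = c ∩ T := by
      ext q
      constructor
      · rintro ⟨hqB, hq⟩
        have hequ := hupd q hq
        exact ⟨hequ ▸ hqB, hq⟩
      · rintro ⟨hqc, hq⟩
        refine ⟨?_, hq⟩
        show Function.update p β (q β) ∈ c
        rw [hupd q hq]; exact hqc
    have hBL : B ∈ L β := hP3 p β B (by rw [hps]; exact hcT)
    have hxB : x β ⊆ B := by
      intro s hs
      have : Function.update p β s ∈ cylUnion x := ⟨β, by simpa using hs⟩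
      exact hsub this
    have hpB : p β ∈ B := by
      show Function.update p β (p β) ∈ c
      rw [Function.update_eq_self]; exact hpc
    rcases (hx β).2.2 B hBL hxB with hB | hB
    · exact absurd (hB ▸ hpB) hpβ
    · show t ∈ B
      rw [hB]; trivial
  refine ⟨hmem, ?_, ?_⟩
  · intro h
    have hp : (fun i => (hne i).choose) ∈ cylUnion x := h ▸ mem_univ _
    obtain ⟨i, hi⟩ := hp
    exact (hne i).choose_spec hi
  · intro c hc hsub
    by_cases hcs : c ⊆ cylUnion x
    · left; exact subset_antisymm hcs hsub
    · right
      obtain ⟨p, hpc, hpx⟩ := not_subset.mp hcs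
      have hpx' : ∀ i, p i ∉ x i := fun i hi => hpx ⟨i, hi⟩
      apply eq_univ_of_forall
      intro q
      have hr : ∀ k : ℕ, (fun i : Fin n => if i.val < k then q i else p i) ∈ c := by
        intro k
        induction k with
        | zero => simpa using hpc
        | succ k ih =>
          by_cases h : k < n
          · have heq : (fun i : Fin n => if i.val < k + 1 then q i else p i) =
                Function.update (fun i : Fin n => if i.val < k then q i else p i)
                  ⟨k, h⟩ (q ⟨k, h⟩) := by
              funext i
              by_cases hik : i = ⟨k, h⟩
              · subst hik; simp
              · rw [Function.update_of_ne hik]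
                have hne' : i.val ≠ k := fun hh => hik (Fin.ext hh)
                by_cases h2 : i.val < k
                · simp [h2, Nat.lt_succ_of_lt h2]
                · have h3 : ¬ i.val < k + 1 := by omega
                  simp [h2, h3]
            rw [heq]
            apply key c hc hsub _ ih ⟨k, h⟩
            show (if (k : ℕ) < k then q _ else p _) ∉ x _
            simpa using hpx' ⟨k, h⟩
          · have heq : (fun i : Fin n => if i.val < k + 1 then q i else p i) =
                (fun i : Fin n => if i.val < k then q i else p i) := by
              funext i
              have h1 : i.val < k := lt_of_lt_of_le i.isLt (le_of_not_gt h)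
              simp [h1, Nat.lt_succ_of_lt h1]
            rw [heq]; exact ih
      have hq : q = fun i : Fin n => if i.val < n then q i else p i :=
        funext fun i => by simp [i.isLt]
      rw [hq]
      exact hr n
end

section
/- If the box product ⊼_α L_α of a family of simple closure spaces is coatomistic, then every L_α is coatomistic. -/
open Set

/-- if the box product is coatomistic, then every factor is coatomistic. -/
theorem stmt_12 {Ω : Type*} [Nonempty Ω] {X : Ω → Type*} [∀ α, Nonempty (X α)]
    (L : ∀ α, Set (Set (X α))) (hL : ∀ α, IsSCS (L α))
    (h : Coatomistic (boxProd L)) : ∀ α, Coatomistic (L α) := by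
  classical
  intro β A hA
  set a0 : ∀ α, Set (X α) := Function.update (fun α => (∅ : Set (X α))) β A with ha0
  have ha0mem : ∀ α, a0 α ∈ L α := by
    intro α
    by_cases hαβ : α = β
    · subst hαβ; simpa [a0] using hA
    · simpa [a0, Function.update_of_ne hαβ] using (hL α).2.1
  have hcyl : cylUnion a0 = {p : ∀ α, X α | p β ∈ A} := by
    ext p
    constructor
    · rintro ⟨α, hα⟩
      by_cases hαβ : α = β
      · subst hαβ; simpa [a0] using hα
      · simp [a0, Function.update_of_ne hαβ] at hα
    · intro hp; exact ⟨β, by simpa [a0] using hp⟩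
  have hAbox : cylUnion a0 ∈ boxProd L := by
    refine ⟨{cylUnion a0}, ?_, ⟨_, rfl⟩, by simp⟩
    rintro B hB
    rw [Set.mem_singleton_iff] at hB
    exact ⟨a0, ha0mem, hB⟩
  apply Subset.antisymm
  · exact fun q hq => Set.mem_sInter.2 (fun x hx => hx.2 hq)
  · intro q hq
    by_contra hqA
    set p : ∀ α, X α := Function.update (fun α => Classical.arbitrary (X α)) β q with hp
    have hpβ : p β = q := Function.update_self _ _ _
    have hpA : p ∉ cylUnion a0 := by
      rw [hcyl]; simpa [hpβ] using hqA
    have hh := h (cylUnion a0) hAbox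
    have hps : p ∉ ⋂₀ {x | IsCoatomOf (boxProd L) x ∧ cylUnion a0 ⊆ x} := by
      rw [← hh]; exact hpA
    rw [Set.mem_sInter] at hps
    push_neg at hps
    obtain ⟨Y, ⟨hYco, hAY⟩, hpY⟩ := hps
    obtain ⟨ω, hωsub, ⟨B0, hB0⟩, hYeq⟩ := hYco.1
    have hex : ∃ b : ∀ α, Set (X α), (∀ α, b α ∈ L α) ∧ Y = cylUnion b := by
      by_contra hno
      push_neg at hno
      have hall : ∀ B ∈ ω, B = univ := by
        intro B hB
        have hBbox : B ∈ boxProd L := by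
          refine ⟨{B}, ?_, ⟨_, rfl⟩, by simp⟩
          rintro C hC
          rw [Set.mem_singleton_iff] at hC
          subst hC
          exact hωsub hB
        have hYB : Y ⊆ B := by
          rw [hYeq]; exact Set.sInter_subset_of_mem hB
        rcases hYco.2.2 B hBbox hYB with hBY | hBu
        · exfalso
          obtain ⟨b, hb, hBcyl⟩ := hωsub hB
          exact hno b hb (by rw [← hBY, hBcyl])
        · exact hBu
      have : Y = univ := by
        rw [hYeq]
        apply Set.eq_univ_of_forall
        intro x
        rw [Set.mem_sInter]
        intro B hB
        rw [hall B hB]; trivial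
      exact hYco.2.1 this
    obtain ⟨b, hbmem, hYb⟩ := hex
    subst hYb
    have hpb : ∀ α, p α ∉ b α := by
      intro α hα
      exact hpY ⟨α, hα⟩
    have hAb : A ⊆ b β := by
      intro t ht
      have hr : Function.update p β t ∈ cylUnion a0 := by
        rw [hcyl]; simpa using ht
      obtain ⟨α, hα⟩ := hAY hr
      by_cases hαβ : α = β
      · subst hαβ; simpa using hα
      · rw [Function.update_of_ne hαβ] at hα
        exact absurd hα (hpb α)
    have hqb : q ∉ b β := by
      rw [← hpβ]; exact hpb β
    have hcoat : IsCoatomOf (L β) (b β) := by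
      refine ⟨hbmem β, fun hu => hqb (hu ▸ trivial), ?_⟩
      intro c hc hbc
      set b' : ∀ α, Set (X α) := Function.update b β c with hb'
      have hb'mem : ∀ α, b' α ∈ L α := by
        intro α
        by_cases hαβ : α = β
        · subst hαβ; simpa [b'] using hc
        · simpa [b', Function.update_of_ne hαβ] using hbmem α
      have hb'sub : ∀ α, b α ⊆ b' α := by
        intro α
        by_cases hαβ : α = β
        · subst hαβ; simpa [b'] using hbc
        · rw [hb', Function.update_of_ne hαβ]
      have hb'box : cylUnion b' ∈ boxProd L := by
        refine ⟨{cylUnion b'}, ?_, ⟨_, rfl⟩, by simp⟩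
        rintro C hC
        rw [Set.mem_singleton_iff] at hC
        exact ⟨b', hb'mem, hC⟩
      have hYsub : cylUnion b ⊆ cylUnion b' := by
        rintro r ⟨α, hα⟩
        exact ⟨α, hb'sub α hα⟩
      rcases hYco.2.2 _ hb'box hYsub with heq | huniv
      · left
        refine Subset.antisymm ?_ hbc
        intro t ht
        have hr : Function.update p β t ∈ cylUnion b' := by
          exact ⟨β, by simpa [b'] using ht⟩
        rw [heq] at hr
        obtain ⟨α, hα⟩ := hr
        by_cases hαβ : α = β
        · subst hαβ; simpa using hα
        · rw [Function.update_of_ne hαβ] at hα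
          exact absurd hα (hpb α)
      · right
        apply Set.eq_univ_of_forall
        intro t
        have hr : Function.update p β t ∈ cylUnion b' := by
          rw [huniv]; trivial
        obtain ⟨α, hα⟩ := hr
        by_cases hαβ : α = β
        · subst hαβ; simpa [b'] using hα
        · rw [hb', Function.update_of_ne hαβ, Function.update_of_ne hαβ] at hα
          exact absurd hα (hpb α)
    exact hqb (hq (b β) ⟨hcoat, hAb⟩)
end
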